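/- Let v: SL(2,ℤ) → ℂ^× be a group homomorphism with |v(A)| = 1 for all A ∈ SL(2,ℤ) (i.e. a weight-0 multiplier), and let f be holomorphic on ℍ with f(Az) = v(A) f(z) for all A ∈ SL(2,ℤ). Then: (1) if f vanishes around infinity, then f = 0; (2) if f is bounded around infinity, then f is constant in case v is the trivial homomorphism, and f = 0 in case v is nontrivial. -/

import Mathlib

open Complex Filter
open scoped Classical Topology

noncomputable section

namespace MLDE

/-- The upper half-plane, as a subset of `ℂ`. -/
def UHP : Set ℂ := {z : ℂ | 0 < z.im}

/-- `q = e^{2πiz}`. -/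
def qq (z : ℂ) : ℂ := Complex.exp (2 * Real.pi * Complex.I * z)

/-- The normalized Eisenstein series `E₂`, via its `q`-expansion. -/
def E2 : ℂ → ℂ := fun z =>
  1 - 24 * ∑' n : ℕ, ((ArithmeticFunction.sigma 1 (n + 1) : ℕ) : ℂ) * qq z ^ (n + 1)

/-- The normalized Eisenstein series `E₄`, via its `q`-expansion. -/
def E4 : ℂ → ℂ := fun z =>
  1 + 240 * ∑' n : ℕ, ((ArithmeticFunction.sigma 3 (n + 1) : ℕ) : ℂ) * qq z ^ (n + 1)

/-- The normalized Eisenstein series `E₆`, via its `q`-expansion. -/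
def E6 : ℂ → ℂ := fun z =>
  1 - 504 * ∑' n : ℕ, ((ArithmeticFunction.sigma 5 (n + 1) : ℕ) : ℂ) * qq z ^ (n + 1)

/-- The modular group `SL(2, ℤ)`. -/
abbrev SL2Z := Matrix.SpecialLinearGroup (Fin 2) ℤ

/-- The automorphy factor `j(A, z) = cz + d`. -/
def jmat (A : SL2Z) (z : ℂ) : ℂ := (A.1 1 0 : ℤ) * z + (A.1 1 1 : ℤ)

/-- The Möbius action `Az = (az + b)/(cz + d)`. -/
def moeb (A : SL2Z) (z : ℂ) : ℂ := ((A.1 0 0 : ℤ) * z + (A.1 0 1 : ℤ)) / jmat A z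

/-- The weight-`k` slash action `(f|_k A)(z) = j(A,z)^{-k} f(Az)`, with principal branch powers. -/
def slash (k : ℝ) (A : SL2Z) (f : ℂ → ℂ) : ℂ → ℂ :=
  fun z => jmat A z ^ (-(k : ℂ)) * f (moeb A z)

/-- `f` is holomorphic on the upper half-plane. -/
def HolOn (f : ℂ → ℂ) : Prop := DifferentiableOn ℂ f UHP

/-- `f` has at most exponential growth around infinity. -/
def ExpGrowth (f : ℂ → ℂ) : Prop :=
  ∃ C > (0:ℝ), ∃ M > (0:ℝ), ∀ z : ℂ, M < z.im → ‖f z‖ < Real.exp (C * z.im)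

/-- `f` is bounded around infinity. -/
def BoundedAtInf (f : ℂ → ℂ) : Prop :=
  ∃ ε > (0:ℝ), ∃ M > (0:ℝ), ∀ z : ℂ, M < z.im → ‖f z‖ < ε

/-- `f` vanishes around infinity. -/
def VanishAtInf (f : ℂ → ℂ) : Prop :=
  ∀ ε > (0:ℝ), ∃ M > (0:ℝ), ∀ z : ℂ, M < z.im → ‖f z‖ < ε

/-- `f` is a holomorphic modular form of weight `k` on `SL(2, ℤ)`. -/
def IsModularForm (k : ℤ) (f : ℂ → ℂ) : Prop :=
  HolOn f ∧ (∀ A : SL2Z, ∀ z ∈ UHP, f (moeb A z) = jmat A z ^ k * f z) ∧ BoundedAtInf f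

/-- The Ramanujan–Serre derivative `D_k f = f' - (k/12) E₂ f`, where `f' = (2πi)⁻¹ df/dz`. -/
def serreD (k : ℝ) (f : ℂ → ℂ) : ℂ → ℂ :=
  fun z => (2 * (Real.pi : ℂ) * Complex.I)⁻¹ * deriv f z - ((k : ℂ) / 12) * E2 z * f z

/-- Iterated Ramanujan–Serre derivative `D_k^(n) = D_{k+2n-2} ∘ ⋯ ∘ D_{k+2} ∘ D_k`. -/
def serreDIter (k : ℝ) : ℕ → (ℂ → ℂ) → (ℂ → ℂ)
  | 0, f => f
  | n + 1, f => serreD (k + 2 * n) (serreDIter k n f)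

/-- `Σ_k`: the set of holomorphic functions on `ℍ` satisfying some monic MLDE of weight `k`. -/
def SigmaSet (k : ℝ) : Set (ℂ → ℂ) :=
  {f | HolOn f ∧ ∃ n : ℕ, ∃ g : ℕ → (ℂ → ℂ),
    (∀ i : ℕ, 1 ≤ i → i ≤ n → IsModularForm (2 * i) (g i)) ∧
    ∀ z ∈ UHP, serreDIter k n f z +
      ∑ i ∈ Finset.Icc 1 n, g i z * serreDIter k (n - i) f z = 0}

lemma UHP_open : IsOpen UHP := isOpen_lt continuous_const Complex.continuous_im

lemma UHP_preconn : IsPreconnected UHP := (convex_halfSpace_im_gt 0).isPreconnected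

lemma coe_smul_eq_moeb (A : SL2Z) (τ : UpperHalfPlane) :
    ((A • τ : UpperHalfPlane) : ℂ) = moeb A ↑τ := by
  rw [UpperHalfPlane.specialLinearGroup_apply]
  simp [moeb, jmat]

lemma moeb_mem (A : SL2Z) {z : ℂ} (hz : z ∈ UHP) : moeb A z ∈ UHP := by
  have h2 := (A • (UpperHalfPlane.mk z hz)).im_pos
  simp only [UpperHalfPlane.im, coe_smul_eq_moeb] at h2
  exact h2


/-- Reduction to the fundamental strip. -/
lemma reduce (v : SL2Z →* ℂ) (hv : ∀ A : SL2Z, ‖v A‖ = 1)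
    (f : ℂ → ℂ) (hmod : ∀ A : SL2Z, ∀ z ∈ UHP, f (moeb A z) = v A * f z)
    {z : ℂ} (hz : z ∈ UHP) :
    ∃ ξ : ℂ, ξ ∈ UHP ∧ |ξ.re| ≤ 1 ∧ 1/2 ≤ ξ.im ∧ ‖f ξ‖ = ‖f z‖ := by
  obtain ⟨g, hg⟩ := ModularGroup.exists_smul_mem_fd (UpperHalfPlane.mk z hz)
  set τ := UpperHalfPlane.mk z hz
  have him : 3 ≤ 4 * (g • τ).im ^ 2 := ModularGroup.three_le_four_mul_im_sq_of_mem_fd hg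
  have him0 : 0 < (g • τ).im := (g • τ).im_pos
  refine ⟨((g • τ : UpperHalfPlane) : ℂ), (g • τ).2, ?_, ?_, ?_⟩
  · exact le_trans hg.2 (by norm_num)
  · show (1:ℝ)/2 ≤ ((g • τ : UpperHalfPlane) : ℂ).im
    have : ((g • τ : UpperHalfPlane) : ℂ).im = (g • τ).im := rfl
    rw [this]; nlinarith
  · rw [coe_smul_eq_moeb]
    show ‖f (moeb g z)‖ = _
    rw [hmod g z hz, norm_mul, hv, one_mul]


/-- Core estimate: a cusp bound propagates to all of `UHP` by the maximum principle. -/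
lemma core (v : SL2Z →* ℂ) (hv : ∀ A : SL2Z, ‖v A‖ = 1)
    (f : ℂ → ℂ) (hf : HolOn f) (hmod : ∀ A : SL2Z, ∀ z ∈ UHP, f (moeb A z) = v A * f z)
    {ε M : ℝ} (hε : 0 < ε) (hM : ∀ z : ℂ, M < z.im → ‖f z‖ < ε) :
    ∀ z ∈ UHP, ‖f z‖ ≤ ε := by
  by_contra hcon
  push_neg at hcon
  obtain ⟨z₀, hz₀, hz₀big⟩ := hcon
  set top : ℝ := max M 1 with htop
  have htop1 : (1:ℝ) ≤ top := le_max_right _ _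
  have htopM : M ≤ top := le_max_left _ _
  set K : Set ℂ := (fun p : ℝ × ℝ => (p.1 : ℂ) + (p.2 : ℂ) * Complex.I) ''
    (Set.Icc (-1) 1 ×ˢ Set.Icc (1/2) top) with hK
  have hKmem : ∀ w : ℂ, w ∈ K ↔ (w.re ∈ Set.Icc (-1:ℝ) 1 ∧ w.im ∈ Set.Icc (1/2) top) := by
    intro w
    constructor
    · rintro ⟨⟨a, b⟩, ⟨ha, hb⟩, rfl⟩
      simp_all
    · rintro ⟨h1, h2⟩
      exact ⟨(w.re, w.im), ⟨h1, h2⟩, by simp [Complex.re_add_im]⟩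
  have hKsub : K ⊆ UHP := by
    intro w hw
    have := ((hKmem w).1 hw).2.1
    show 0 < w.im
    linarith
  have hKcp : IsCompact K :=
    ((isCompact_Icc.prod isCompact_Icc).image (by fun_prop))
  have hKne : K.Nonempty := ⟨Complex.I, (hKmem _).2 (by simp; constructor <;> linarith)⟩
  obtain ⟨ζ, hζK, hζmax⟩ := hKcp.exists_isMaxOn hKne
    ((hf.continuousOn.mono hKsub).norm)
  have hζUHP : ζ ∈ UHP := hKsub hζK
  -- the reduced representative of z₀ must land in K
  have hz₀le : ‖f z₀‖ ≤ ‖f ζ‖ := by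
    obtain ⟨ξ, hξU, hξre, hξim, hξabs⟩ := reduce v hv f hmod hz₀
    rcases le_or_gt ξ.im top with h | h
    · have : ξ ∈ K := (hKmem ξ).2 ⟨abs_le.1 hξre, hξim, h⟩
      calc ‖f z₀‖ = ‖f ξ‖ := hξabs.symm
        _ ≤ ‖f ζ‖ := hζmax this
    · exfalso
      have := hM ξ (lt_of_le_of_lt htopM h)
      rw [hξabs] at this
      linarith
  -- ζ is a global max on UHP
  have hglob : IsMaxOn (norm ∘ f) UHP ζ := by
    intro w hw
    obtain ⟨ξ, hξU, hξre, hξim, hξabs⟩ := reduce v hv f hmod hw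
    show ‖f w‖ ≤ ‖f ζ‖
    have : ‖f w‖ = ‖f ξ‖ := hξabs.symm ▸ rfl
    rcases le_or_gt ξ.im top with h | h
    · have hmem : ξ ∈ K := (hKmem ξ).2 ⟨abs_le.1 hξre, hξim, h⟩
      calc ‖f w‖ = ‖f ξ‖ := by rw [hξabs]
        _ ≤ ‖f ζ‖ := hζmax hmem
    · have h1 := hM ξ (lt_of_le_of_lt htopM h)
      have : ‖f w‖ < ε := by rw [← hξabs]; exact h1
      have h2 : ε < ‖f z₀‖ := hz₀big
      calc ‖f w‖ = ‖f w‖ := rfl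
        _ ≤ ‖f z₀‖ := by linarith
        _ ≤ ‖f ζ‖ := hz₀le
  have hEq := Complex.eqOn_of_isPreconnected_of_isMaxOn_norm UHP_preconn UHP_open hf hζUHP hglob
  -- contradiction at a high point
  have hwU : ((top + 1) * Complex.I : ℂ) ∈ UHP := by
    show (0:ℝ) < ((top + 1) * Complex.I : ℂ).im
    simp; linarith
  have h1 : f ((top + 1) * Complex.I) = f ζ := hEq hwU
  have h2 : ‖f ((top + 1) * Complex.I)‖ < ε := by
    apply hM
    simp; linarith
  have h3 : f z₀ = f ζ := hEq hz₀
  rw [h1] at h2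
  rw [h3] at hz₀big
  linarith


/-- The translation matrix. -/
def Tm : SL2Z := ⟨!![1, 1; 0, 1], by norm_num [Matrix.det_fin_two_of]⟩

lemma moeb_Tm (z : ℂ) : moeb Tm z = z + 1 := by
  simp [moeb, jmat, Tm]


/-- Choice of logarithm of a unimodular number in `(-1, 0]`. -/
lemma exists_beta {t : ℂ} (ht : ‖t‖ = 1) :
    ∃ β : ℝ, -1 < β ∧ β ≤ 0 ∧ Complex.exp (2 * Real.pi * Complex.I * β) = t ∧
      (t = 1 → β = 0) ∧ (t ≠ 1 → β < 0) := by
  by_cases h1 : t = 1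
  · exact ⟨0, by norm_num, le_refl 0, by simp [h1], fun _ => rfl, fun h => absurd h1 h⟩
  · have hexp : Complex.exp (t.arg * Complex.I) = t := by
      have := Complex.norm_mul_exp_arg_mul_I t
      rwa [ht, Complex.ofReal_one, one_mul] at this
    have hpi : (0:ℝ) < Real.pi := Real.pi_pos
    have harg1 : -Real.pi < t.arg := Complex.neg_pi_lt_arg t
    have harg2 : t.arg ≤ Real.pi := Complex.arg_le_pi t
    have hargne : t.arg ≠ 0 := by
      intro h0
      apply h1
      rw [← hexp, h0]
      simp
    rcases lt_or_gt_of_ne hargne with ha | ha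
    · refine ⟨t.arg / (2 * Real.pi), ?_, ?_, ?_, fun h => absurd h h1, fun _ => ?_⟩
      · rw [lt_div_iff₀ (by linarith : (0:ℝ) < 2 * Real.pi)]
        linarith
      · exact le_of_lt (div_neg_of_neg_of_pos ha (by linarith))
      · have heq : (2 * Real.pi * Complex.I * (↑(t.arg / (2 * Real.pi)) : ℂ))
            = t.arg * Complex.I := by
          have h2 : (2 * (Real.pi:ℂ)) ≠ 0 :=
            mul_ne_zero two_ne_zero (Complex.ofReal_ne_zero.mpr Real.pi_ne_zero)
          push_cast
          rw [mul_comm (2 * (Real.pi:ℂ) * Complex.I), div_mul_eq_mul_div, div_eq_iff h2]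
          ring
        rw [heq, hexp]
      · exact div_neg_of_neg_of_pos ha (by linarith)
    · refine ⟨t.arg / (2 * Real.pi) - 1, ?_, ?_, ?_, fun h => absurd h h1, fun _ => ?_⟩
      · have : 0 < t.arg / (2 * Real.pi) := div_pos ha (by linarith)
        linarith
      · have : t.arg / (2 * Real.pi) ≤ 1/2 := by
          rw [div_le_iff₀ (by linarith)]
          linarith
        linarith
      · have : (2 * Real.pi * Complex.I * (↑(t.arg / (2 * Real.pi) - 1) : ℂ))
            = t.arg * Complex.I - 2 * Real.pi * Complex.I := by
          have h2 : (2 * (Real.pi:ℂ)) ≠ 0 :=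
            mul_ne_zero two_ne_zero (Complex.ofReal_ne_zero.mpr Real.pi_ne_zero)
          push_cast
          rw [mul_sub, mul_one, mul_comm (2 * (Real.pi:ℂ) * Complex.I), div_mul_eq_mul_div]
          rw [sub_left_inj, div_eq_iff h2]
          ring
        rw [this, Complex.exp_sub, hexp]
        have h2pi : Complex.exp (2 * Real.pi * Complex.I) = 1 := by
          exact Complex.exp_two_pi_mul_I
        rw [h2pi, div_one]
      · have : t.arg / (2 * Real.pi) ≤ 1/2 := by
          rw [div_le_iff₀ (by linarith)]
          linarith
        linarith


lemma ev_imp {p : ℂ → Prop} (h : ∀ᶠ z in comap Complex.im atTop, p z) :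
    ∃ a : ℝ, ∀ z : ℂ, a ≤ z.im → p z := by
  rw [Filter.eventually_comap] at h
  obtain ⟨a, ha⟩ := Filter.eventually_atTop.mp h
  exact ⟨a, fun z hz => ha z.im hz z rfl⟩

lemma vanish_zero (v : SL2Z →* ℂ) (hv : ∀ A : SL2Z, ‖v A‖ = 1)
    (f : ℂ → ℂ) (hf : HolOn f) (hmod : ∀ A : SL2Z, ∀ z ∈ UHP, f (moeb A z) = v A * f z)
    (hvan : VanishAtInf f) : ∀ z ∈ UHP, f z = 0 := by
  intro z hz
  have hle : ∀ ε : ℝ, 0 < ε → ‖f z‖ ≤ ε := by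
    intro ε hε
    obtain ⟨M, hM0, hM⟩ := hvan ε hε
    exact core v hv f hf hmod hε hM z hz
  by_contra hne
  have h0 : 0 < ‖f z‖ := norm_pos_iff.mpr hne
  have := hle (‖f z‖ / 2) (by linarith)
  linarith


lemma bounded_const (v : SL2Z →* ℂ) (hv : ∀ A : SL2Z, ‖v A‖ = 1)
    (f : ℂ → ℂ) (hf : HolOn f) (hmod : ∀ A : SL2Z, ∀ z ∈ UHP, f (moeb A z) = v A * f z)
    (hb : BoundedAtInf f) : ∃ c : ℂ, ∀ z ∈ UHP, f z = c := by
  obtain ⟨ε, hε, M, hMpos, hM⟩ := hb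
  set t : ℂ := v Tm with htdef
  have ht : ‖t‖ = 1 := hv Tm
  obtain ⟨β, hβ1, hβ0, hβexp, hβtriv, hβnontriv⟩ := exists_beta ht
  set w : ℂ := 2 * Real.pi * Complex.I * (β:ℂ) with hwdef
  set g : ℂ → ℂ := fun z => Complex.exp (-w * z) * (if 0 < z.im then f z else 0) with hgdef
  have hfper : ∀ z : ℂ, 0 < z.im → f (z + 1) = t * f z := by
    intro z hz
    rw [← moeb_Tm z]
    exact hmod Tm z hz
  have hper : Function.Periodic g 1 := by
    intro z
    by_cases hz : 0 < z.im
    · have hz1 : 0 < (z + 1).im := by simpa using hz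
      have key : Complex.exp (-w * (z+1)) * t = Complex.exp (-w * z) := by
        rw [mul_add, mul_one, Complex.exp_add, ← hβexp, mul_assoc, ← Complex.exp_add]
        simp
      simp only [hgdef, if_pos hz, if_pos hz1]
      rw [hfper z hz, ← mul_assoc, key]
    · have hz1 : ¬ 0 < (z + 1).im := by simpa using hz
      simp only [hgdef, if_neg hz, if_neg hz1, mul_zero]
  have hdiff : ∀ z : ℂ, 0 < z.im → DifferentiableAt ℂ g z := by
    intro z hz
    have h1 : DifferentiableAt ℂ (fun u => Complex.exp (-w * u) * f u) z := by
      apply DifferentiableAt.mul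
      · exact (differentiable_id.const_mul (-w)).cexp.differentiableAt
      · exact hf.differentiableAt (UHP_open.mem_nhds hz)
    apply h1.congr_of_eventuallyEq
    filter_upwards [UHP_open.mem_nhds hz] with u hu
    simp only [hgdef, if_pos (show 0 < u.im from hu)]
  have him_ev : ∀ b : ℝ, ∀ᶠ z : ℂ in comap Complex.im atTop, b < z.im :=
    fun b => Filter.tendsto_comap.eventually (Filter.eventually_gt_atTop b)
  have hghol : ∀ᶠ z : ℂ in comap Complex.im atTop, DifferentiableAt ℂ g z :=
    (him_ev 0).mono fun z hz => hdiff z hz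
  have habs_exp : ∀ z : ℂ, ‖Complex.exp (-w * z)‖
      = Real.exp (2 * Real.pi * β * z.im) := by
    intro z
    rw [Complex.norm_exp]
    congr 1
    simp [hwdef, Complex.mul_re, Complex.mul_im]
  have hgbound : ∀ z : ℂ, M < z.im → ‖g z‖ ≤ ε * Real.exp (2 * Real.pi * β * z.im) := by
    intro z hz
    have hz0 : 0 < z.im := lt_trans hMpos hz
    simp only [hgdef, if_pos hz0, norm_mul, habs_exp]
    rw [mul_comm]
    exact mul_le_mul_of_nonneg_right (le_of_lt (hM z hz)) (Real.exp_nonneg _)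
  have hexp_le_one : ∀ z : ℂ, 0 < z.im → Real.exp (2 * Real.pi * β * z.im) ≤ 1 := by
    intro z hz
    rw [Real.exp_le_one_iff]
    have : 2 * Real.pi * β ≤ 0 :=
      mul_nonpos_of_nonneg_of_nonpos (by positivity) hβ0
    exact mul_nonpos_of_nonpos_of_nonneg this (le_of_lt hz)
  have hgbd : Filter.BoundedAtFilter (comap Complex.im atTop) g := by
    rw [Filter.BoundedAtFilter, Asymptotics.isBigO_iff]
    refine ⟨ε, ?_⟩
    filter_upwards [him_ev M] with z hz
    have := (hgbound z hz).trans
      (mul_le_of_le_one_right (le_of_lt hε) (hexp_le_one z (lt_trans hMpos hz)))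
    simpa using this
  have htend : Tendsto g (comap Complex.im atTop) (𝓝 (Function.Periodic.cuspFunction 1 g 0)) :=
    Function.Periodic.tendsto_at_I_inf one_pos hper hghol hgbd
  have habs_exp' : ∀ z : ℂ, ‖Complex.exp (w * z)‖
      = Real.exp (-(2 * Real.pi * β * z.im)) := by
    intro z
    rw [Complex.norm_exp]
    congr 1
    simp [hwdef, Complex.mul_re, Complex.mul_im]
  rcases lt_or_eq_of_le hβ0 with hβneg | hβzero
  · -- β < 0 : f vanishes at infinity, so f = 0
    have hzero : Filter.ZeroAtFilter (comap Complex.im atTop) g := by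
      have h2 : Tendsto (fun y : ℝ => 2 * Real.pi * β * y) atTop atBot :=
        Filter.tendsto_id.const_mul_atTop_of_neg (by nlinarith [Real.pi_pos])
      have h1 : Tendsto (fun y : ℝ => ε * Real.exp (2 * Real.pi * β * y)) atTop (𝓝 0) := by
        have h3 := Real.tendsto_exp_atBot.comp h2
        simpa using Filter.Tendsto.const_mul ε h3
      have hbnd : Tendsto (fun z : ℂ => ε * Real.exp (2 * Real.pi * β * z.im))
          (comap Complex.im atTop) (𝓝 0) := h1.comp Filter.tendsto_comap
      apply squeeze_zero_norm' ?_ hbnd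
      filter_upwards [him_ev M] with z hz
      simpa using hgbound z hz
    have hdecay := Function.Periodic.exp_decay_of_zero_at_inf one_pos hper hghol hzero
    rw [Asymptotics.isBigO_iff] at hdecay
    obtain ⟨C, hC⟩ := hdecay
    obtain ⟨a, ha⟩ := ev_imp (hC.and (him_ev (max M 0)))
    have hfb : ∀ z : ℂ, a ≤ z.im →
        ‖f z‖ ≤ |C| * Real.exp (-(2 * Real.pi * (1 + β)) * z.im) := by
      intro z hz
      obtain ⟨h1, h2⟩ := ha z hz
      have hz0 : 0 < z.im := lt_of_le_of_lt (le_max_right M 0) h2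
      have hfg : f z = Complex.exp (w * z) * g z := by
        simp only [hgdef]
        rw [if_pos hz0, ← mul_assoc, ← Complex.exp_add]
        simp
      have hgle : ‖g z‖ ≤ |C| * Real.exp (-2 * Real.pi * z.im / 1) := by
        have hb := h1
        simp only [Real.norm_eq_abs] at hb
        calc ‖g z‖ ≤ C * |Real.exp (-2 * Real.pi * z.im / 1)| := hb
          _ ≤ |C| * Real.exp (-2 * Real.pi * z.im / 1) := by
            rw [abs_of_pos (Real.exp_pos _)]
            exact mul_le_mul_of_nonneg_right (le_abs_self C) (Real.exp_nonneg _)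
      calc ‖f z‖ = ‖Complex.exp (w * z)‖ * ‖g z‖ := by
            rw [hfg, norm_mul]
        _ ≤ Real.exp (-(2 * Real.pi * β * z.im)) * (|C| * Real.exp (-2 * Real.pi * z.im / 1)) := by
            rw [habs_exp' z]
            exact mul_le_mul_of_nonneg_left hgle (Real.exp_nonneg _)
        _ = |C| * Real.exp (-(2 * Real.pi * (1 + β)) * z.im) := by
            rw [← mul_assoc, mul_comm _ (|C|), mul_assoc, ← Real.exp_add]
            congr 2
            ring
    have hvan : VanishAtInf f := by
      intro ε' hε'
      have h1 : Tendsto (fun y : ℝ => |C| * Real.exp (-(2 * Real.pi * (1 + β)) * y))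
          atTop (𝓝 0) := by
        have h2 : Tendsto (fun y : ℝ => -(2 * Real.pi * (1 + β)) * y) atTop atBot :=
          Filter.tendsto_id.const_mul_atTop_of_neg (by nlinarith [Real.pi_pos])
        have h3 := Real.tendsto_exp_atBot.comp h2
        simpa using Filter.Tendsto.const_mul (|C|) h3
      obtain ⟨a', ha'⟩ := Filter.eventually_atTop.mp (h1.eventually (gt_mem_nhds hε'))
      refine ⟨max (max a a') 1, lt_of_lt_of_le zero_lt_one (le_max_right _ _), fun z hz => ?_⟩
      have hza : a ≤ z.im :=
        le_of_lt (lt_of_le_of_lt (le_trans (le_max_left a a') (le_max_left _ 1)) hz)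
      have hza' : a' ≤ z.im :=
        le_of_lt (lt_of_le_of_lt (le_trans (le_max_right a a') (le_max_left _ 1)) hz)
      exact lt_of_le_of_lt (hfb z hza) (ha' z.im hza')
    exact ⟨0, vanish_zero v hv f hf hmod hvan⟩
  · -- β = 0 : use the maximum principle at the cusp
    have hw0 : w = 0 := by
      simp [hwdef, hβzero]
    have hfg : ∀ z : ℂ, 0 < z.im → g z = f z := by
      intro z hz
      simp [hgdef, hw0, if_pos hz]
    set F := Function.Periodic.cuspFunction 1 g with hF
    have hclaim : ∀ z ∈ UHP, ‖f z‖ ≤ ‖F 0‖ := by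
      intro z hz
      by_contra hlt
      push_neg at hlt
      set mid : ℝ := (‖F 0‖ + ‖f z‖) / 2 with hmid
      have hm1 : ‖F 0‖ < mid := by
        rw [hmid]; linarith
      have hm2 : mid < ‖f z‖ := by
        rw [hmid]; linarith
      have hmpos : 0 < mid := lt_of_le_of_lt (norm_nonneg _) hm1
      have hev : ∀ᶠ u : ℂ in comap Complex.im atTop,
          dist (g u) (F 0) < mid - ‖F 0‖ :=
        (Metric.tendsto_nhds.mp htend) _ (by linarith)
      obtain ⟨a, ha⟩ := ev_imp (hev.and (him_ev 0))
      have hcusp : ∀ u : ℂ, max a 1 < u.im → ‖f u‖ < mid := by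
        intro u hu
        have h1 := ha u (le_of_lt (lt_of_le_of_lt (le_max_left a 1) hu))
        have hu0 : 0 < u.im := h1.2
        have hd : ‖g u - F 0‖ < mid - ‖F 0‖ := by
          rw [← dist_eq_norm]
          exact h1.1
        have habs : ‖g u‖ < mid := by
          calc ‖g u‖ = ‖(g u - F 0) + F 0‖ := by ring_nf
            _ ≤ ‖g u - F 0‖ + ‖F 0‖ := norm_add_le _ _
            _ < mid := by linarith
        rwa [hfg u hu0] at habs
      have := core v hv f hf hmod hmpos hcusp z hz
      linarith
    have hq_mem : ∀ z : ℂ, 0 < z.im → Function.Periodic.qParam 1 z ∈ Metric.ball (0:ℂ) 1 := by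
      intro z hz
      rw [Metric.mem_ball, dist_zero_right, Function.Periodic.norm_qParam]
      rw [show (1:ℝ) = Real.exp 0 by simp]
      rw [Real.exp_lt_exp]
      rw [Real.exp_zero]
      have : -2 * Real.pi * z.im / 1 < 0 := by
        rw [div_one]
        nlinarith [Real.pi_pos]
      linarith
    have hFdiff : DifferentiableOn ℂ F (Metric.ball 0 1) := by
      intro q hq
      by_cases hq0 : q = 0
      · subst hq0
        exact (Function.Periodic.differentiableAt_cuspFunction_zero one_pos hper hghol
          hgbd).differentiableWithinAt
      · have hqa : ‖q‖ < 1 := by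
          rw [Metric.mem_ball, dist_zero_right] at hq
          exact hq
        have him := Function.Periodic.im_invQParam_pos_of_norm_lt_one one_pos hqa hq0
        have hd := Function.Periodic.differentiableAt_cuspFunction one_ne_zero hper
          (hdiff _ him)
        rw [Function.Periodic.qParam_right_inv one_ne_zero hq0] at hd
        exact hd.differentiableWithinAt
    have hFmax : IsMaxOn (norm ∘ F) (Metric.ball 0 1) 0 := by
      intro q hq
      show ‖F q‖ ≤ ‖F 0‖
      by_cases hq0 : q = 0
      · subst hq0
        exact le_refl _
      · have hqa : ‖q‖ < 1 := by
          rw [Metric.mem_ball, dist_zero_right] at hq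
          exact hq
        have him := Function.Periodic.im_invQParam_pos_of_norm_lt_one one_pos hqa hq0
        rw [hF,
          Function.Periodic.cuspFunction_eq_of_nonzero _ _ hq0]
        rw [hfg _ him]
        exact hclaim _ him
    have hEq := Complex.eqOn_of_isPreconnected_of_isMaxOn_norm
      (convex_ball (0:ℂ) 1).isPreconnected Metric.isOpen_ball hFdiff
      (Metric.mem_ball_self one_pos) hFmax
    refine ⟨F 0, fun z hz => ?_⟩
    calc f z = g z := (hfg z hz).symm
      _ = F (Function.Periodic.qParam 1 z) :=
          (Function.Periodic.eq_cuspFunction one_ne_zero hper z).symm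
      _ = F 0 := hEq (hq_mem z hz)



/-- Forms of weight `0` with a unitary character: a vanishing one is zero; a bounded one is
constant for the trivial character and zero otherwise. -/
theorem weight_zero_multiplier_classification
    (v : SL2Z →* ℂ) (hv : ∀ A : SL2Z, ‖v A‖ = 1)
    (f : ℂ → ℂ) (hf : HolOn f)
    (hmod : ∀ A : SL2Z, ∀ z ∈ UHP, f (moeb A z) = v A * f z) :
    (VanishAtInf f → ∀ z ∈ UHP, f z = 0) ∧
    (BoundedAtInf f →
      (v = 1 → ∃ c : ℂ, ∀ z ∈ UHP, f z = c) ∧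
      (v ≠ 1 → ∀ z ∈ UHP, f z = 0)) := by
  constructor
  · exact vanish_zero v hv f hf hmod
  · intro hb
    obtain ⟨c, hc⟩ := bounded_const v hv f hf hmod hb
    refine ⟨fun _ => ⟨c, hc⟩, fun hv1 z hz => ?_⟩
    obtain ⟨A, hA⟩ : ∃ A : SL2Z, v A ≠ 1 := by
      by_contra h
      push_neg at h
      exact hv1 (MonoidHom.ext fun A => by rw [h A, MonoidHom.one_apply])
    have h1 : f (moeb A z) = v A * f z := hmod A z hz
    have h2 : f (moeb A z) = c := hc _ (moeb_mem A hz)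
    have h3 : f z = c := hc z hz
    have h4 : c = v A * c := by rw [← h3, ← h1, h2, h3]
    have h5 : c = 0 := by
      by_contra hc0
      exact hA (mul_right_cancel₀ hc0 (by rw [one_mul]; exact h4)).symm
    rw [h3, h5]


end MLDE
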